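/- For all real numbers x, c, x̃, c̃ with c > 0 and c̃ > 0, the following first-order lower bound holds: ln(1 + x^2/c) ≥ ln(1 + x̃^2/c̃) + 2*x̃*x/c̃ − (x̃^2/(c̃*(c̃ + x̃^2)))*(c + x^2) − x̃^2/c̃. -/

import Mathlib

theorem sca_log_minorant (x c xt ct : ℝ) (hc : 0 < c) (hct : 0 < ct) :
    Real.log (1 + x ^ 2 / c) ≥
      Real.log (1 + xt ^ 2 / ct) + 2 * xt * x / ct
        - xt ^ 2 / (ct * (ct + xt ^ 2)) * (c + x ^ 2) - xt ^ 2 / ct := by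
  have hP : (0:ℝ) < c + x ^ 2 := by positivity
  have hQ : (0:ℝ) < ct + xt ^ 2 := by positivity
  have hA : (0:ℝ) < 1 + x ^ 2 / c := by positivity
  have hB : (0:ℝ) < 1 + xt ^ 2 / ct := by positivity
  have key := Real.log_le_sub_one_of_pos (div_pos hB hA)
  rw [Real.log_div (ne_of_gt hB) (ne_of_gt hA)] at key
  have h2 : (1 + xt ^ 2 / ct) / (1 + x ^ 2 / c) - 1 ≤
      xt ^ 2 / (ct * (ct + xt ^ 2)) * (c + x ^ 2) + xt ^ 2 / ct - 2 * xt * x / ct := by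
    rw [div_sub_one (ne_of_gt hA), div_le_iff₀ hA]
    have hsq : 0 ≤ ((ct + xt ^ 2) * x - xt * (c + x ^ 2)) ^ 2 := sq_nonneg _
    field_simp
    nlinarith [hsq, sq_nonneg (((ct + xt ^ 2) * x - xt * (c + x ^ 2)) * (c * ct)),
      mul_pos hc hct, mul_pos hP hQ, sq_nonneg (x*ct - xt*c)]
  linarith
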